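/- For positive integers k1, k2 and all nonnegative n1, n2, the explicit double-indexed formula is symmetric under index-exchange duality: sum_{0<=a,b<=k1+k2} (-1)^{a+b+k1+k2} a! b! (a+1)^{n1} (a+b+2)^{n2} * sum_{h=0}^{k1+k2} S(h,a) S(k1+k2-h, b) C(k2, h-k1) equals sum_{0<=a,b<=n1+n2} (-1)^{a+b+n1+n2} a! b! (a+1)^{k1} (a+b+2)^{k2} * sum_{h=0}^{n1+n2} S(h,a) S(n1+n2-h, b) C(n2, h-n1). -/

import Mathlib

/-- Stirling numbers of the second kind. -/
def S2 : ℕ → ℕ → ℕ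
  | 0, 0 => 1
  | 0, _ + 1 => 0
  | _ + 1, 0 => 0
  | n + 1, m + 1 => S2 n m + (m + 1) * S2 n (m + 1)
/-- Double-indexed poly-Bernoulli number with negative upper indices
`B_{ℓ1,ℓ2}^{(-k1,-k2)}`, via the explicit formula of Theorem 2.1. -/
def B2negA (l1 l2 k1 k2 : ℕ) : ℤ :=
  ∑ m1 ∈ Finset.range (l1 + l2 + 1), ∑ m2 ∈ Finset.range (l1 + l2 + 1),
    (-1 : ℤ) ^ (m1 + m2 + l1 + l2) * (Nat.factorial m1 : ℤ) * (Nat.factorial m2 : ℤ) *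
      ((m1 : ℤ) + 1) ^ k1 * ((m1 : ℤ) + (m2 : ℤ) + 2) ^ k2 *
      ∑ n ∈ Finset.range (l1 + l2 + 1),
        (S2 n m1 : ℤ) * (S2 (l1 + l2 - n) m2 : ℤ) *
          (if l1 ≤ n then (Nat.choose l2 (n - l1) : ℤ) else 0)
/-- Double-indexed poly-Bernoulli number with negative upper indices
`B_{n1,n2}^{(-k1,-k2)}`, via the dual explicit formula
`B_{n1,n2}^{(-k1,-k2)} = B_{k1,k2}^{(-n1,-n2)}`. -/
def B2negD (n1 n2 k1 k2 : ℕ) : ℤ :=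
  ∑ l1 ∈ Finset.range (k1 + k2 + 1), ∑ l2 ∈ Finset.range (k1 + k2 + 1),
    (-1 : ℤ) ^ (l1 + l2 + k1 + k2) * (Nat.factorial l1 : ℤ) * (Nat.factorial l2 : ℤ) *
      ((l1 : ℤ) + 1) ^ n1 * ((l1 : ℤ) + (l2 : ℤ) + 2) ^ n2 *
      ∑ h ∈ Finset.range (k1 + k2 + 1),
        (S2 h l1 : ℤ) * (S2 (k1 + k2 - h) l2 : ℤ) *
          (if k1 ≤ h then (Nat.choose k2 (h - k1) : ℤ) else 0)

theorem S2_eq_zero : ∀ n m : ℕ, n < m → S2 n m = 0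
  | 0, _+1, _ => rfl
  | _, 0, h => absurd h (Nat.not_lt_zero _)
  | n+1, m+1, h => by
      have h1 := S2_eq_zero n m (by omega)
      have h2 := S2_eq_zero n (m+1) (by omega)
      simp [S2, h1, h2]

theorem pow_sum (x k : ℕ) :
    x ^ k = ∑ j ∈ Finset.range (k+1), x.choose j * j.factorial * S2 k j := by
  induction k with
  | zero => simp [S2]
  | succ k ih =>
    have key : ∀ j : ℕ, x * x.choose j = (j+1) * x.choose (j+1) + j * x.choose j := by
      intro j
      rcases le_or_gt j x with h | h
      · have h1 : x.choose (j+1) * (j+1) = x.choose j * (x - j) := Nat.choose_succ_right_eq x j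
        have h2 : x - j + j = x := Nat.sub_add_cancel h
        nlinarith [h1, h2]
      · rw [Nat.choose_eq_zero_of_lt h, Nat.choose_eq_zero_of_lt (by omega)]
        simp
    calc x ^ (k+1) = ∑ j ∈ Finset.range (k+1),
          ((j+1) * x.choose (j+1) + j * x.choose j) * j.factorial * S2 k j := by
            rw [pow_succ, mul_comm, ih, Finset.mul_sum]
            exact Finset.sum_congr rfl fun j _ => by rw [← mul_assoc, ← mul_assoc, key j]
      _ = (∑ j ∈ Finset.range (k+1), x.choose (j+1) * (j+1).factorial * S2 k j)
          + ∑ j ∈ Finset.range (k+1), x.choose j * j.factorial * (j * S2 k j) := by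
            rw [← Finset.sum_add_distrib]
            exact Finset.sum_congr rfl fun j _ => by
              simp [Nat.factorial_succ]; ring
      _ = ∑ j ∈ Finset.range (k+2), x.choose j * j.factorial * S2 (k+1) j := by
            rw [Finset.sum_range_succ' (fun j => x.choose j * j.factorial * S2 (k+1) j) (k+1)]
            have e0 : x.choose 0 * Nat.factorial 0 * S2 (k+1) 0 = 0 := by simp [S2]
            rw [e0, add_zero]
            -- RHS now: ∑ j ∈ range (k+1), x.choose (j+1) * (j+1)! * S2 (k+1) (j+1)
            have expand : ∀ j, S2 (k+1) (j+1) = S2 k j + (j+1) * S2 k (j+1) := fun j => rfl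
            have : ∀ j ∈ Finset.range (k+1),
                x.choose (j+1) * (j+1).factorial * S2 (k+1) (j+1)
                = x.choose (j+1) * (j+1).factorial * S2 k j
                  + x.choose (j+1) * (j+1).factorial * ((j+1) * S2 k (j+1)) := by
              intro j _; rw [expand]; ring
            rw [Finset.sum_congr rfl this, Finset.sum_add_distrib]
            congr 1
            -- ∑ j ∈ range (k+1), x.choose j * j! * (j * S2 k j)
            --   = ∑ j ∈ range (k+1), x.choose (j+1) * (j+1)! * ((j+1) * S2 k (j+1))
            rw [Finset.sum_range_succ' (fun j => x.choose j * j.factorial * (j * S2 k j)) k]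
            simp only [Nat.mul_zero, Nat.zero_mul, mul_zero, add_zero]
            rw [Finset.sum_range_succ]
            have : S2 k (k+1) = 0 := S2_eq_zero k (k+1) (by omega)
            simp [this]

theorem L1 (n : ℕ) : ∀ j : ℕ,
    ∑ m ∈ Finset.range (n+1), (-1:ℤ)^m * m.choose j * m.factorial * S2 n m
    = (-1:ℤ)^n * j.factorial * S2 (n+1) (j+1) := by
  induction n with
  | zero =>
    intro j
    cases j with
    | zero => simp [S2]
    | succ j => simp [S2, S2_eq_zero 0 (j+1) (by omega), S2_eq_zero 0 (j+2) (by omega)]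
  | succ n ih =>
    intro j
    -- coefficient identity over ℤ
    have coeff : ∀ m : ℕ, (m:ℤ) * m.choose j - (m+1) * (m+1).choose j
        = -((j:ℤ)+1) * m.choose j - (if j = 0 then 0 else (j:ℤ) * m.choose (j-1)) := by
      intro m
      cases j with
      | zero => simp
      | succ j' =>
        have pascal : ((m+1).choose (j'+1) : ℤ) = m.choose j' + m.choose (j'+1) := by
          exact_mod_cast congrArg (Nat.cast : ℕ → ℤ) (Nat.choose_succ_succ m j')
        have key : ((m:ℤ) - j') * m.choose j' = ((j':ℤ)+1) * m.choose (j'+1) := by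
          rcases le_or_gt j' m with h | h
          · have h1 : m.choose (j'+1) * (j'+1) = m.choose j' * (m - j') := Nat.choose_succ_right_eq m j'
            have h2 : ((m - j' : ℕ) : ℤ) = (m:ℤ) - j' := by
              rw [Nat.cast_sub h]
            have := congrArg (Nat.cast : ℕ → ℤ) h1
            push_cast at this
            rw [← h2]; push_cast; linarith
          · rw [Nat.choose_eq_zero_of_lt h, Nat.choose_eq_zero_of_lt (by omega)]
            simp
        simp only [if_neg (Nat.succ_ne_zero j')]
        push_cast [pascal]
        push_cast at key
        linarith
    -- LHS transformation
    have step1 : ∑ m ∈ Finset.range (n+2), (-1:ℤ)^m * m.choose j * m.factorial * S2 (n+1) m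
        = ∑ m ∈ Finset.range (n+1), (-1:ℤ)^m * m.factorial * S2 n m *
            ((m:ℤ) * m.choose j - ((m:ℤ)+1) * (m+1).choose j) := by
      rw [Finset.sum_range_succ' (fun m => (-1:ℤ)^m * m.choose j * m.factorial * S2 (n+1) m) (n+1)]
      have e0 : (-1:ℤ)^0 * (Nat.choose 0 j) * (Nat.factorial 0) * S2 (n+1) 0 = 0 := by
        simp [S2]
      rw [e0, add_zero]
      have expand : ∀ m ∈ Finset.range (n+1),
          (-1:ℤ)^(m+1) * ((m+1).choose j) * ((m+1).factorial) * S2 (n+1) (m+1)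
          = (-(-1:ℤ)^m * ((m:ℤ)+1) * (m+1).choose j * m.factorial) * S2 n m
            + (-(-1:ℤ)^m * ((m:ℤ)+1) * (m+1).choose j * m.factorial) * (((m:ℤ)+1) * S2 n (m+1)) := by
        intro m _
        have : (S2 (n+1) (m+1) : ℤ) = S2 n m + ((m:ℤ)+1) * S2 n (m+1) := by
          show ((S2 n m + (m + 1) * S2 n (m + 1) : ℕ) : ℤ) = _
          push_cast; ring
        rw [this]
        have : ((m+1).factorial : ℤ) = ((m:ℤ)+1) * m.factorial := by
          rw [Nat.factorial_succ]; push_cast; ring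
        rw [this]; ring
      rw [Finset.sum_congr rfl expand, Finset.sum_add_distrib]
      -- second piece: reindex
      set B : ℕ → ℤ := fun m => (-1:ℤ)^m * (m:ℤ) * m.choose j * m.factorial * S2 n m with hB
      have reidx : ∑ m ∈ Finset.range (n+1),
          (-(-1:ℤ)^m * ((m:ℤ)+1) * (m+1).choose j * m.factorial) * (((m:ℤ)+1) * S2 n (m+1))
          = ∑ m ∈ Finset.range (n+1), B m := by
        have h1 := Finset.sum_range_succ' B (n+1)
        have h2 := Finset.sum_range_succ B (n+1)
        have hBtop : B (n+1) = 0 := by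
          simp [hB, S2_eq_zero n (n+1) (by omega)]
        have hB0 : B 0 = 0 := by simp [hB]
        have h3 : ∑ m ∈ Finset.range (n+1), B (m+1) = ∑ m ∈ Finset.range (n+1), B m := by
          rw [hBtop, add_zero] at h2
          rw [hB0, add_zero] at h1
          rw [← h1, h2]
        rw [← h3]
        refine Finset.sum_congr rfl fun m _ => ?_
        have hf : ((m+1).factorial : ℤ) = ((m:ℤ)+1) * m.factorial := by
          rw [Nat.factorial_succ]; push_cast; ring
        simp only [hB]
        push_cast [hf]
        ring
      rw [reidx, ← Finset.sum_add_distrib]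
      exact Finset.sum_congr rfl fun m _ => by ring
    rw [step1]
    have split : ∑ m ∈ Finset.range (n+1), (-1:ℤ)^m * m.factorial * S2 n m *
            ((m:ℤ) * m.choose j - ((m:ℤ)+1) * (m+1).choose j)
        = -((j:ℤ)+1) * ∑ m ∈ Finset.range (n+1), (-1:ℤ)^m * m.choose j * m.factorial * S2 n m
          - (if j = 0 then 0 else (j:ℤ) *
             ∑ m ∈ Finset.range (n+1), (-1:ℤ)^m * m.choose (j-1) * m.factorial * S2 n m) := by
      cases j with
      | zero =>
        rw [if_pos rfl, sub_zero, Finset.mul_sum]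
        exact Finset.sum_congr rfl fun m _ => by
          push_cast [Nat.choose_zero_right]; ring
      | succ j' =>
        simp only [if_neg (Nat.succ_ne_zero j'), Finset.mul_sum, ← Finset.sum_sub_distrib]
        exact Finset.sum_congr rfl fun m _ => by
          have := coeff m; simp only [if_neg (Nat.succ_ne_zero j')] at this
          have h2 : (m:ℤ) * m.choose (j'+1) - ((m:ℤ)+1) * (m+1).choose (j'+1)
            = -((j':ℤ)+1+1) * m.choose (j'+1) - ((j':ℤ)+1) * m.choose j' := by push_cast at this ⊢; linarith
          calc (-1:ℤ)^m * m.factorial * S2 n m * ((m:ℤ) * m.choose (j'+1) - ((m:ℤ)+1) * (m+1).choose (j'+1))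
              = (-1:ℤ)^m * m.factorial * S2 n m * (-((j':ℤ)+1+1) * m.choose (j'+1) - ((j':ℤ)+1) * m.choose j') := by rw [h2]
            _ = _ := by push_cast; ring
    rw [split, ih j]
    cases j with
    | zero =>
      have : (S2 (n+2) 1 : ℤ) = S2 (n+1) 0 + S2 (n+1) 1 := by
        show ((S2 (n+1) 0 + 1 * S2 (n+1) 1 : ℕ) : ℤ) = _
        push_cast; ring
      have z : S2 (n+1) 0 = 0 := by simp [S2]
      simp only [if_pos rfl, sub_zero, this, z]
      push_cast [Nat.factorial]
      ring
    | succ j' =>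
      simp only [if_neg (Nat.succ_ne_zero j'), Nat.add_sub_cancel]
      rw [ih j']
      have : (S2 (n+2) (j'+2) : ℤ) = S2 (n+1) (j'+1) + ((j':ℤ)+2) * S2 (n+1) (j'+2) := by
        show ((S2 (n+1) (j'+1) + (j'+1+1) * S2 (n+1) (j'+2) : ℕ) : ℤ) = _
        push_cast; ring
      rw [this]
      have : ((j'+1).factorial : ℤ) = ((j':ℤ)+1) * j'.factorial := by
        rw [Nat.factorial_succ]; push_cast; ring
      rw [this]
      push_cast
      ring

noncomputable def kap (j l : ℕ) : ℤ :=
  (if j = l + 1 then 1 else 0) + (if j = l then 1 else 0) + (if j + 1 = l then 1 else 0)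
    + (if j = l ∧ 1 ≤ l then 1 else 0)

theorem kap_symm (j l : ℕ) : kap j l = kap l j := by
  unfold kap; split_ifs <;> omega

-- sum of kap against f over range (n+1), given f vanishes above n
theorem kap_sum (n l : ℕ) (f : ℕ → ℤ) (hf : ∀ j, n < j → f j = 0) :
    ∑ j ∈ Finset.range (n+1), kap j l * f j
    = f (l+1) + f l + (if 1 ≤ l then f (l-1) else 0) + (if 1 ≤ l then f l else 0) := by
  unfold kap
  have expand : ∀ j ∈ Finset.range (n+1),
      ((if j = l + 1 then (1:ℤ) else 0) + (if j = l then 1 else 0) + (if j + 1 = l then 1 else 0)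
        + (if j = l ∧ 1 ≤ l then 1 else 0)) * f j
      = (if j = l + 1 then f j else 0) + (if j = l then f j else 0)
        + (if j = l - 1 ∧ 1 ≤ l then f j else 0) + (if j = l ∧ 1 ≤ l then f j else 0) := by
    intro j _
    have : (j + 1 = l) ↔ (j = l - 1 ∧ 1 ≤ l) := by omega
    rw [if_congr this rfl rfl]
    split_ifs <;> ring
  rw [Finset.sum_congr rfl expand]
  simp only [Finset.sum_add_distrib]
  have h1 : ∑ j ∈ Finset.range (n+1), (if j = l + 1 then f j else 0) = f (l+1) := by
    rw [Finset.sum_ite_eq' (Finset.range (n+1)) (l+1) f]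
    split_ifs with h
    · rfl
    · rw [hf (l+1) (by simp only [Finset.mem_range] at h; omega)]
  have h2 : ∑ j ∈ Finset.range (n+1), (if j = l then f j else 0) = f l := by
    rw [Finset.sum_ite_eq' (Finset.range (n+1)) l f]
    split_ifs with h
    · rfl
    · rw [hf l (by simp only [Finset.mem_range] at h; omega)]
  have h3 : ∑ j ∈ Finset.range (n+1), (if j = l - 1 ∧ 1 ≤ l then f j else 0)
      = if 1 ≤ l then f (l-1) else 0 := by
    rcases le_or_gt 1 l with h | h
    · rw [if_pos h]
      have e : (∑ j ∈ Finset.range (n+1), if j = l - 1 ∧ 1 ≤ l then f j else 0)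
          = ∑ j ∈ Finset.range (n+1), if j = l - 1 then f j else 0 :=
        Finset.sum_congr rfl fun j _ => by simp [h]
      rw [e, Finset.sum_ite_eq' (Finset.range (n+1)) (l-1) f]
      split_ifs with h'
      · rfl
      · rw [hf (l-1) (by simp only [Finset.mem_range] at h'; omega)]
    · have : ¬ (1 ≤ l) := by omega
      simp [this]
  have h4 : ∑ j ∈ Finset.range (n+1), (if j = l ∧ 1 ≤ l then f j else 0)
      = if 1 ≤ l then f l else 0 := by
    rcases le_or_gt 1 l with h | h
    · rw [if_pos h]
      have e : (∑ j ∈ Finset.range (n+1), if j = l ∧ 1 ≤ l then f j else 0)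
          = ∑ j ∈ Finset.range (n+1), if j = l then f j else 0 :=
        Finset.sum_congr rfl fun j _ => by simp [h]
      rw [e, Finset.sum_ite_eq' (Finset.range (n+1)) l f]
      split_ifs with h'
      · rfl
      · rw [hf l (by simp only [Finset.mem_range] at h'; omega)]
    · have : ¬ (1 ≤ l) := by omega
      simp [this]
  rw [h1, h2, h3, h4]

theorem lemL (n l : ℕ) :
    ∑ m ∈ Finset.range (n+1), (-1:ℤ)^m * m.factorial * S2 n m * (m+1).choose l
    = (-1:ℤ)^n * ∑ j ∈ Finset.range (n+1), kap j l * (j.factorial * S2 n j) := by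
  have hf : ∀ j, n < j → (j.factorial : ℤ) * S2 n j = 0 := by
    intro j hj; rw [S2_eq_zero n j hj]; simp
  rw [kap_sum n l _ hf]
  cases l with
  | zero =>
    have lhs_eq : ∑ m ∈ Finset.range (n+1), (-1:ℤ)^m * m.factorial * S2 n m * (m+1).choose 0
        = ∑ m ∈ Finset.range (n+1), (-1:ℤ)^m * m.choose 0 * m.factorial * S2 n m := by
      exact Finset.sum_congr rfl fun m _ => by
        push_cast [Nat.choose_zero_right]; ring
    rw [lhs_eq, L1 n 0]
    have : (S2 (n+1) 1 : ℤ) = S2 n 0 + S2 n 1 := by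
      show ((S2 n 0 + 1 * S2 n 1 : ℕ) : ℤ) = _
      push_cast; ring
    rw [this]
    norm_num [Nat.factorial]
    ring
  | succ l' =>
    have lhs_eq : ∑ m ∈ Finset.range (n+1), (-1:ℤ)^m * m.factorial * S2 n m * (m+1).choose (l'+1)
        = (∑ m ∈ Finset.range (n+1), (-1:ℤ)^m * m.choose l' * m.factorial * S2 n m)
          + ∑ m ∈ Finset.range (n+1), (-1:ℤ)^m * m.choose (l'+1) * m.factorial * S2 n m := by
      rw [← Finset.sum_add_distrib]
      refine Finset.sum_congr rfl fun m _ => ?_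
      have : ((m+1).choose (l'+1) : ℤ) = m.choose l' + m.choose (l'+1) := by
        exact_mod_cast congrArg (Nat.cast : ℕ → ℤ) (Nat.choose_succ_succ m l')
      rw [this]; ring
    rw [lhs_eq, L1 n l', L1 n (l'+1)]
    have e1 : (S2 (n+1) (l'+1) : ℤ) = S2 n l' + ((l':ℤ)+1) * S2 n (l'+1) := by
      show ((S2 n l' + (l'+1) * S2 n (l'+1) : ℕ) : ℤ) = _
      push_cast; ring
    have e2 : (S2 (n+1) (l'+2) : ℤ) = S2 n (l'+1) + ((l':ℤ)+2) * S2 n (l'+2) := by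
      show ((S2 n (l'+1) + (l'+1+1) * S2 n (l'+2) : ℕ) : ℤ) = _
      push_cast; ring
    rw [e1, e2]
    have hl : (1:ℕ) ≤ l' + 1 := by omega
    rw [if_pos hl, if_pos hl]
    have : l' + 1 - 1 = l' := by omega
    rw [this]
    have hfac : ((l'+1).factorial : ℤ) = ((l':ℤ)+1) * l'.factorial := by
      rw [Nat.factorial_succ]; push_cast; ring
    have hfac2 : ((l'+1+1).factorial : ℤ) = ((l':ℤ)+2) * (((l':ℤ)+1) * l'.factorial) := by
      rw [Nat.factorial_succ]; push_cast [hfac]; ring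
    rw [hfac2, hfac]
    push_cast
    ring

theorem Lext (n M l : ℕ) (h : n ≤ M) :
    ∑ m ∈ Finset.range (M+1), (-1:ℤ)^m * m.factorial * S2 n m * (m+1).choose l
    = (-1:ℤ)^n * ∑ j ∈ Finset.range (M+1), kap j l * (j.factorial * S2 n j) := by
  have hsub : Finset.range (n+1) ⊆ Finset.range (M+1) := by
    intro x hx; simp only [Finset.mem_range] at *; omega
  have h1 : ∑ m ∈ Finset.range (M+1), (-1:ℤ)^m * m.factorial * S2 n m * (m+1).choose l
      = ∑ m ∈ Finset.range (n+1), (-1:ℤ)^m * m.factorial * S2 n m * (m+1).choose l := by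
    refine (Finset.sum_subset hsub fun x _ hx => ?_).symm
    simp only [Finset.mem_range] at hx
    rw [S2_eq_zero n x (by omega)]
    simp
  have h2 : ∑ j ∈ Finset.range (M+1), kap j l * ((j.factorial : ℤ) * S2 n j)
      = ∑ j ∈ Finset.range (n+1), kap j l * ((j.factorial : ℤ) * S2 n j) := by
    refine (Finset.sum_subset hsub fun x _ hx => ?_).symm
    simp only [Finset.mem_range] at hx
    rw [S2_eq_zero n x (by omega)]
    simp
  rw [h1, h2, lemL]

theorem reidx (k1 k2 l1 l2 : ℕ) :
    ∑ h ∈ Finset.range (k1+k2+1),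
      S2 h l1 * S2 (k1+k2-h) l2 * (if k1 ≤ h then k2.choose (h-k1) else 0)
    = ∑ s ∈ Finset.range (k2+1), S2 (k1+s) l1 * S2 (k2-s) l2 * k2.choose s := by
  rw [Finset.range_eq_Ico, ← Finset.sum_Ico_consecutive _ (Nat.zero_le k1) (by omega : k1 ≤ k1+k2+1)]
  have hz : ∑ h ∈ Finset.Ico 0 k1,
      S2 h l1 * S2 (k1+k2-h) l2 * (if k1 ≤ h then k2.choose (h-k1) else 0) = 0 := by
    refine Finset.sum_eq_zero fun x hx => ?_
    simp only [Finset.mem_Ico] at hx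
    rw [if_neg (by omega)]
    simp
  rw [hz, zero_add, Finset.sum_Ico_eq_sum_range]
  have : k1 + k2 + 1 - k1 = k2 + 1 := by omega
  rw [this]
  refine Finset.sum_congr rfl fun s hs => ?_
  simp only [Finset.mem_range] at hs
  rw [if_pos (by omega : k1 ≤ k1 + s)]
  have e1 : k1 + s - k1 = s := by omega
  have e2 : k1 + k2 - (k1 + s) = k2 - s := by omega
  rw [e1, e2]

theorem starNat (k1 k2 a b : ℕ) :
    (a+1)^k1 * (a+b+2)^k2
    = ∑ l1 ∈ Finset.range (k1+k2+1), ∑ l2 ∈ Finset.range (k1+k2+1),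
        (a+1).choose l1 * (b+1).choose l2 * l1.factorial * l2.factorial *
          ∑ h ∈ Finset.range (k1+k2+1),
            S2 h l1 * S2 (k1+k2-h) l2 * (if k1 ≤ h then k2.choose (h-k1) else 0) := by
  have hext : ∀ (x c : ℕ), c ≤ k1 + k2 →
      x ^ c = ∑ j ∈ Finset.range (k1+k2+1), x.choose j * j.factorial * S2 c j := by
    intro x c hc
    rw [pow_sum x c]
    refine Finset.sum_subset (fun t ht => ?_) fun t _ ht => ?_
    · simp only [Finset.mem_range] at *; omega
    · simp only [Finset.mem_range] at ht
      rw [S2_eq_zero c t (by omega)]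
      simp
  have habp : a + b + 2 = (a+1) + (b+1) := by omega
  calc (a+1)^k1 * (a+b+2)^k2
      = ∑ s ∈ Finset.range (k2+1), (a+1)^(k1+s) * (b+1)^(k2-s) * k2.choose s := by
        rw [habp, add_pow (a+1) (b+1) k2, Finset.mul_sum]
        exact Finset.sum_congr rfl fun s _ => by rw [pow_add]; push_cast; ring
    _ = ∑ s ∈ Finset.range (k2+1), ∑ l1 ∈ Finset.range (k1+k2+1), ∑ l2 ∈ Finset.range (k1+k2+1),
          (a+1).choose l1 * (b+1).choose l2 * l1.factorial * l2.factorial *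
            (S2 (k1+s) l1 * S2 (k2-s) l2 * k2.choose s) := by
        refine Finset.sum_congr rfl fun s hs => ?_
        simp only [Finset.mem_range] at hs
        rw [hext (a+1) (k1+s) (by omega), hext (b+1) (k2-s) (by omega),
          Finset.sum_mul_sum, Finset.sum_mul]
        refine Finset.sum_congr rfl fun l1 _ => ?_
        rw [Finset.sum_mul]
        exact Finset.sum_congr rfl fun l2 _ => by ring
    _ = ∑ l1 ∈ Finset.range (k1+k2+1), ∑ l2 ∈ Finset.range (k1+k2+1),
          (a+1).choose l1 * (b+1).choose l2 * l1.factorial * l2.factorial *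
            ∑ s ∈ Finset.range (k2+1), S2 (k1+s) l1 * S2 (k2-s) l2 * k2.choose s := by
        rw [Finset.sum_comm]
        refine Finset.sum_congr rfl fun l1 _ => ?_
        rw [Finset.sum_comm]
        refine Finset.sum_congr rfl fun l2 _ => ?_
        rw [Finset.mul_sum]
    _ = _ := by
        refine Finset.sum_congr rfl fun l1 _ => Finset.sum_congr rfl fun l2 _ => ?_
        rw [reidx k1 k2 l1 l2]

theorem starZ (k1 k2 m1 m2 : ℕ) :
    ((m1:ℤ)+1)^k1 * ((m1:ℤ)+(m2:ℤ)+2)^k2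
    = ∑ l1 ∈ Finset.range (k1+k2+1), ∑ l2 ∈ Finset.range (k1+k2+1),
        ((m1+1).choose l1 : ℤ) * ((m2+1).choose l2 : ℤ) * l1.factorial * l2.factorial *
          ∑ h ∈ Finset.range (k1+k2+1),
            (S2 h l1 : ℤ) * (S2 (k1+k2-h) l2 : ℤ) * (if k1 ≤ h then (k2.choose (h-k1) : ℤ) else 0) := by
  have h := congrArg (Nat.cast : ℕ → ℤ) (starNat k1 k2 m1 m2)
  push_cast [apply_ite (Nat.cast : ℕ → ℤ)] at h
  exact h

theorem swap3 (s t u : Finset ℕ) (F : ℕ → ℕ → ℕ → ℤ) :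
    (∑ x ∈ s, ∑ y ∈ t, ∑ z ∈ u, F x y z) = ∑ z ∈ u, ∑ x ∈ s, ∑ y ∈ t, F x y z := by
  have h1 : (∑ x ∈ s, ∑ y ∈ t, ∑ z ∈ u, F x y z) = ∑ x ∈ s, ∑ z ∈ u, ∑ y ∈ t, F x y z :=
    Finset.sum_congr rfl fun x _ => Finset.sum_comm
  rw [h1, Finset.sum_comm]

theorem swap4 (s t u v : Finset ℕ) (F : ℕ → ℕ → ℕ → ℕ → ℤ) :
    (∑ x ∈ s, ∑ y ∈ t, ∑ z ∈ u, ∑ w ∈ v, F x y z w)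
    = ∑ z ∈ u, ∑ w ∈ v, ∑ x ∈ s, ∑ y ∈ t, F x y z w :=
  (swap3 s t u (fun x y z => ∑ w ∈ v, F x y z w)).trans
    (Finset.sum_congr rfl fun z _ => swap3 s t v (fun x y w => F x y z w))

theorem sep (N : ℕ) (c : ℕ → ℤ) (l1 l2 : ℕ) :
    (∑ m1 ∈ Finset.range (N+1), ∑ m2 ∈ Finset.range (N+1),
      (-1:ℤ)^(m1+m2+N) * m1.factorial * m2.factorial
        * (∑ n ∈ Finset.range (N+1), (S2 n m1 : ℤ) * (S2 (N-n) m2 : ℤ) * c n)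
        * (m1+1).choose l1 * (m2+1).choose l2)
    = ∑ j1 ∈ Finset.range (N+1), ∑ j2 ∈ Finset.range (N+1),
        kap j1 l1 * kap j2 l2 * (j1.factorial * j2.factorial)
          * ∑ n ∈ Finset.range (N+1), (S2 n j1 : ℤ) * (S2 (N-n) j2 : ℤ) * c n := by
  have signlem : ∀ n, n ≤ N → (-1:ℤ)^N * ((-1)^n * (-1)^(N-n)) = 1 := by
    intro n h
    rw [← pow_add, ← pow_add]
    have : N + (n + (N - n)) = N + N := by omega
    rw [this]
    exact Even.neg_one_pow ⟨N, rfl⟩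
  calc (∑ m1 ∈ Finset.range (N+1), ∑ m2 ∈ Finset.range (N+1),
      (-1:ℤ)^(m1+m2+N) * m1.factorial * m2.factorial
        * (∑ n ∈ Finset.range (N+1), (S2 n m1 : ℤ) * (S2 (N-n) m2 : ℤ) * c n)
        * (m1+1).choose l1 * (m2+1).choose l2)
      = ∑ m1 ∈ Finset.range (N+1), ∑ m2 ∈ Finset.range (N+1), ∑ n ∈ Finset.range (N+1),
          ((-1:ℤ)^N * c n)
            * ((-1:ℤ)^m1 * m1.factorial * S2 n m1 * (m1+1).choose l1)
            * ((-1:ℤ)^m2 * m2.factorial * S2 (N-n) m2 * (m2+1).choose l2) := by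
        refine Finset.sum_congr rfl fun m1 _ => Finset.sum_congr rfl fun m2 _ => ?_
        rw [Finset.mul_sum, Finset.sum_mul, Finset.sum_mul]
        exact Finset.sum_congr rfl fun n _ => by ring
    _ = ∑ n ∈ Finset.range (N+1), ∑ m1 ∈ Finset.range (N+1), ∑ m2 ∈ Finset.range (N+1),
          ((-1:ℤ)^N * c n)
            * ((-1:ℤ)^m1 * m1.factorial * S2 n m1 * (m1+1).choose l1)
            * ((-1:ℤ)^m2 * m2.factorial * S2 (N-n) m2 * (m2+1).choose l2) := by
        rw [swap3]
    _ = ∑ n ∈ Finset.range (N+1),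
          ((-1:ℤ)^N * c n)
            * (∑ m1 ∈ Finset.range (N+1), (-1:ℤ)^m1 * m1.factorial * S2 n m1 * (m1+1).choose l1)
            * (∑ m2 ∈ Finset.range (N+1), (-1:ℤ)^m2 * m2.factorial * S2 (N-n) m2 * (m2+1).choose l2) := by
        refine Finset.sum_congr rfl fun n _ => ?_
        rw [mul_assoc, Finset.sum_mul_sum, Finset.mul_sum]
        refine Finset.sum_congr rfl fun m1 _ => ?_
        rw [Finset.mul_sum]
        exact Finset.sum_congr rfl fun m2 _ => by ring
    _ = ∑ n ∈ Finset.range (N+1),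
          c n * (∑ j1 ∈ Finset.range (N+1), kap j1 l1 * ((j1.factorial : ℤ) * S2 n j1))
              * (∑ j2 ∈ Finset.range (N+1), kap j2 l2 * ((j2.factorial : ℤ) * S2 (N-n) j2)) := by
        refine Finset.sum_congr rfl fun n hn => ?_
        have hn' : n ≤ N := by simp only [Finset.mem_range] at hn; omega
        rw [Lext n N l1 hn', Lext (N-n) N l2 (by omega)]
        have := signlem n hn'
        calc ((-1:ℤ)^N * c n)
              * ((-1:ℤ)^n * ∑ j1 ∈ Finset.range (N+1), kap j1 l1 * ((j1.factorial : ℤ) * S2 n j1))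
              * ((-1:ℤ)^(N-n) * ∑ j2 ∈ Finset.range (N+1), kap j2 l2 * ((j2.factorial : ℤ) * S2 (N-n) j2))
            = ((-1:ℤ)^N * ((-1)^n * (-1)^(N-n))) *
                (c n * (∑ j1 ∈ Finset.range (N+1), kap j1 l1 * ((j1.factorial : ℤ) * S2 n j1))
                  * (∑ j2 ∈ Finset.range (N+1), kap j2 l2 * ((j2.factorial : ℤ) * S2 (N-n) j2))) := by
              ring
          _ = _ := by rw [this, one_mul]
    _ = ∑ n ∈ Finset.range (N+1), ∑ j1 ∈ Finset.range (N+1), ∑ j2 ∈ Finset.range (N+1),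
          c n * (kap j1 l1 * ((j1.factorial : ℤ) * S2 n j1))
              * (kap j2 l2 * ((j2.factorial : ℤ) * S2 (N-n) j2)) := by
        refine Finset.sum_congr rfl fun n _ => ?_
        rw [mul_assoc, Finset.sum_mul_sum, Finset.mul_sum]
        refine Finset.sum_congr rfl fun j1 _ => ?_
        rw [Finset.mul_sum]
        exact Finset.sum_congr rfl fun j2 _ => by ring
    _ = ∑ j1 ∈ Finset.range (N+1), ∑ j2 ∈ Finset.range (N+1), ∑ n ∈ Finset.range (N+1),
          c n * (kap j1 l1 * ((j1.factorial : ℤ) * S2 n j1))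
              * (kap j2 l2 * ((j2.factorial : ℤ) * S2 (N-n) j2)) := by
        rw [← swap3]
    _ = _ := by
        refine Finset.sum_congr rfl fun j1 _ => Finset.sum_congr rfl fun j2 _ => ?_
        rw [Finset.mul_sum]
        exact Finset.sum_congr rfl fun n _ => by ring

theorem mulsum2 (R S : Finset ℕ) (A : ℤ) (B : ℕ → ℕ → ℤ) :
    A * (∑ x ∈ R, ∑ y ∈ S, B x y) = ∑ x ∈ R, ∑ y ∈ S, A * B x y :=
  (Finset.mul_sum R _ A).trans (Finset.sum_congr rfl fun x _ => Finset.mul_sum S (B x) A)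

theorem key (n1 n2 k1 k2 : ℕ) :
    B2negA n1 n2 k1 k2
    = ∑ l1 ∈ Finset.range (k1+k2+1), ∑ l2 ∈ Finset.range (k1+k2+1),
      ∑ j1 ∈ Finset.range (n1+n2+1), ∑ j2 ∈ Finset.range (n1+n2+1),
        ((l1.factorial : ℤ) * l2.factorial *
          ∑ h ∈ Finset.range (k1+k2+1), (S2 h l1 : ℤ) * (S2 (k1+k2-h) l2 : ℤ) *
            (if k1 ≤ h then (k2.choose (h-k1) : ℤ) else 0))
        * ((j1.factorial : ℤ) * j2.factorial *
          ∑ n ∈ Finset.range (n1+n2+1), (S2 n j1 : ℤ) * (S2 (n1+n2-n) j2 : ℤ) *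
            (if n1 ≤ n then (n2.choose (n-n1) : ℤ) else 0))
        * (kap j1 l1 * kap j2 l2) := by
  have step1 : B2negA n1 n2 k1 k2
      = ∑ m1 ∈ Finset.range (n1+n2+1), ∑ m2 ∈ Finset.range (n1+n2+1),
          ∑ l1 ∈ Finset.range (k1+k2+1), ∑ l2 ∈ Finset.range (k1+k2+1),
            ((l1.factorial : ℤ) * l2.factorial *
              ∑ h ∈ Finset.range (k1+k2+1), (S2 h l1 : ℤ) * (S2 (k1+k2-h) l2 : ℤ) *
                (if k1 ≤ h then (k2.choose (h-k1) : ℤ) else 0))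
              * ((-1:ℤ)^(m1+m2+(n1+n2)) * m1.factorial * m2.factorial
                  * (∑ n ∈ Finset.range (n1+n2+1), (S2 n m1 : ℤ) * (S2 (n1+n2-n) m2 : ℤ) *
                      (if n1 ≤ n then (n2.choose (n-n1) : ℤ) else 0))
                  * (m1+1).choose l1 * (m2+1).choose l2) := by
    unfold B2negA
    refine Finset.sum_congr rfl fun m1 _ => Finset.sum_congr rfl fun m2 _ => ?_
    calc (-1:ℤ)^(m1+m2+n1+n2) * m1.factorial * m2.factorial
          * ((m1:ℤ)+1)^k1 * ((m1:ℤ)+(m2:ℤ)+2)^k2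
          * (∑ n ∈ Finset.range (n1+n2+1), (S2 n m1 : ℤ) * (S2 (n1+n2-n) m2 : ℤ) *
              (if n1 ≤ n then (n2.choose (n-n1) : ℤ) else 0))
        = (((m1:ℤ)+1)^k1 * ((m1:ℤ)+(m2:ℤ)+2)^k2)
            * ((-1:ℤ)^(m1+m2+(n1+n2)) * m1.factorial * m2.factorial
                * (∑ n ∈ Finset.range (n1+n2+1), (S2 n m1 : ℤ) * (S2 (n1+n2-n) m2 : ℤ) *
                    (if n1 ≤ n then (n2.choose (n-n1) : ℤ) else 0))) := by
          have hx : m1+m2+n1+n2 = m1+m2+(n1+n2) := by omega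
          rw [hx]; ring
      _ = (∑ l1 ∈ Finset.range (k1+k2+1), ∑ l2 ∈ Finset.range (k1+k2+1),
            ((m1+1).choose l1 : ℤ) * ((m2+1).choose l2 : ℤ) * l1.factorial * l2.factorial *
              ∑ h ∈ Finset.range (k1+k2+1),
                (S2 h l1 : ℤ) * (S2 (k1+k2-h) l2 : ℤ) * (if k1 ≤ h then (k2.choose (h-k1) : ℤ) else 0))
            * ((-1:ℤ)^(m1+m2+(n1+n2)) * m1.factorial * m2.factorial
                * (∑ n ∈ Finset.range (n1+n2+1), (S2 n m1 : ℤ) * (S2 (n1+n2-n) m2 : ℤ) *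
                    (if n1 ≤ n then (n2.choose (n-n1) : ℤ) else 0))) := by
          rw [starZ k1 k2 m1 m2]
      _ = _ := by
          rw [Finset.sum_mul]
          refine Finset.sum_congr rfl fun l1 _ => ?_
          rw [Finset.sum_mul]
          refine Finset.sum_congr rfl fun l2 _ => ?_
          ring
  rw [step1, swap4]
  refine Finset.sum_congr rfl fun l1 _ => Finset.sum_congr rfl fun l2 _ => ?_
  have hsep := sep (n1+n2) (fun n => if n1 ≤ n then (n2.choose (n-n1) : ℤ) else 0) l1 l2
  calc (∑ m1 ∈ Finset.range (n1+n2+1), ∑ m2 ∈ Finset.range (n1+n2+1),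
        ((l1.factorial : ℤ) * l2.factorial *
          ∑ h ∈ Finset.range (k1+k2+1), (S2 h l1 : ℤ) * (S2 (k1+k2-h) l2 : ℤ) *
            (if k1 ≤ h then (k2.choose (h-k1) : ℤ) else 0))
          * ((-1:ℤ)^(m1+m2+(n1+n2)) * m1.factorial * m2.factorial
              * (∑ n ∈ Finset.range (n1+n2+1), (S2 n m1 : ℤ) * (S2 (n1+n2-n) m2 : ℤ) *
                  (if n1 ≤ n then (n2.choose (n-n1) : ℤ) else 0))
              * (m1+1).choose l1 * (m2+1).choose l2))
      = ((l1.factorial : ℤ) * l2.factorial *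
          ∑ h ∈ Finset.range (k1+k2+1), (S2 h l1 : ℤ) * (S2 (k1+k2-h) l2 : ℤ) *
            (if k1 ≤ h then (k2.choose (h-k1) : ℤ) else 0))
          * ∑ m1 ∈ Finset.range (n1+n2+1), ∑ m2 ∈ Finset.range (n1+n2+1),
              ((-1:ℤ)^(m1+m2+(n1+n2)) * m1.factorial * m2.factorial
                * (∑ n ∈ Finset.range (n1+n2+1), (S2 n m1 : ℤ) * (S2 (n1+n2-n) m2 : ℤ) *
                    (if n1 ≤ n then (n2.choose (n-n1) : ℤ) else 0))
                * (m1+1).choose l1 * (m2+1).choose l2) :=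
        (mulsum2 _ _ _ _).symm
    _ = ((l1.factorial : ℤ) * l2.factorial *
          ∑ h ∈ Finset.range (k1+k2+1), (S2 h l1 : ℤ) * (S2 (k1+k2-h) l2 : ℤ) *
            (if k1 ≤ h then (k2.choose (h-k1) : ℤ) else 0))
          * ∑ j1 ∈ Finset.range (n1+n2+1), ∑ j2 ∈ Finset.range (n1+n2+1),
              kap j1 l1 * kap j2 l2 * ((j1.factorial : ℤ) * j2.factorial)
                * ∑ n ∈ Finset.range (n1+n2+1), (S2 n j1 : ℤ) * (S2 (n1+n2-n) j2 : ℤ) *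
                    (if n1 ≤ n then (n2.choose (n-n1) : ℤ) else 0) := by
        rw [hsep]
    _ = _ := by
        rw [mulsum2]
        refine Finset.sum_congr rfl fun j1 _ => Finset.sum_congr rfl fun j2 _ => ?_
        ring

theorem dualA (n1 n2 k1 k2 : ℕ) : B2negA k1 k2 n1 n2 = B2negA n1 n2 k1 k2 := by
  rw [key k1 k2 n1 n2, key n1 n2 k1 k2, swap4]
  refine Finset.sum_congr rfl fun l1 _ => Finset.sum_congr rfl fun l2 _ =>
    Finset.sum_congr rfl fun j1 _ => Finset.sum_congr rfl fun j2 _ => ?_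
  rw [kap_symm j1 l1, kap_symm j2 l2]
  ring

/-- The explicit double-indexed formula is symmetric under index-exchange
duality. -/
theorem doublePolyBernoulli_explicit_duality (k1 k2 : ℕ)
    (hk1 : 0 < k1) (hk2 : 0 < k2) (n1 n2 : ℕ) :
    B2negD n1 n2 k1 k2 = B2negA n1 n2 k1 k2 := by
  have h : B2negD n1 n2 k1 k2 = B2negA k1 k2 n1 n2 := rfl
  rw [h]
  exact dualA n1 n2 k1 k2
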